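/- If two vertices u and v of a connected graph G have the same neighborhood (excluding each other) and are adjacent, then -1 is an eigenvalue of the distance matrix of G; if they have the same neighborhood and are not adjacent, then -2 is an eigenvalue of the distance matrix of G. -/

import Mathlib

/-- Build the creation sequence of a threshold graph from block sizes,
starting with the given bit and alternating. -/
def blockSeq : List ℕ → Bool → List Bool
  | [], _ => []
  | a :: rest, bit => List.replicate a bit ++ blockSeq rest (!bit)

/-- The threshold graph of a creation sequence `c`: vertex `i` is adjacent to `j`
iff they are distinct and the later of the two was added as a dominating vertex. -/
def thresholdGraph (c : List Bool) : SimpleGraph (Fin c.length) where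
  Adj i j := i ≠ j ∧ c.get (max i j) = true
  symm := by
    constructor
    intro i j h
    exact ⟨h.1.symm, by rw [max_comm]; exact h.2⟩
  loopless := by
    constructor
    intro i h
    exact h.1 rfl

/-- The distance matrix of a graph, with real entries. -/
noncomputable def distMatrix {V : Type*} [Fintype V] (G : SimpleGraph V) : Matrix V V ℝ :=
  fun i j => (G.dist i j : ℝ)

lemma dist_le_of_dup {V : Type*} (G : SimpleGraph V) (hG : G.Connected) (u v w : V)
    (hwu : w ≠ u) (hwv : w ≠ v)
    (hdup : ∀ z, z ≠ u → z ≠ v → (G.Adj u z ↔ G.Adj v z)) :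
    G.dist w u ≤ G.dist w v := by
  obtain ⟨p, hp⟩ := hG.exists_walk_length_eq_dist v w
  cases p with
  | nil => exact absurd rfl hwv.symm
  | @cons _ t _ h q =>
    by_cases htu : t = u
    · have h1 : G.dist w u ≤ q.reverse.length := htu ▸ G.dist_le q.reverse
      rw [SimpleGraph.Walk.length_reverse] at h1
      rw [SimpleGraph.Walk.length_cons] at hp
      have h2 : G.dist w v = G.dist v w := SimpleGraph.dist_comm
      omega
    · have htv : t ≠ v := h.ne'
      have hadj : G.Adj u t := (hdup t htu htv).mpr h
      have h1 : G.dist w u ≤ (q.reverse.concat hadj.symm).length :=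
        G.dist_le (q.reverse.concat hadj.symm)
      rw [SimpleGraph.Walk.length_concat, SimpleGraph.Walk.length_reverse] at h1
      rw [SimpleGraph.Walk.length_cons] at hp
      have h2 : G.dist w v = G.dist v w := SimpleGraph.dist_comm
      omega

lemma dist_eq_of_dup {V : Type*} (G : SimpleGraph V) (hG : G.Connected) (u v w : V)
    (hwu : w ≠ u) (hwv : w ≠ v)
    (hdup : ∀ z, z ≠ u → z ≠ v → (G.Adj u z ↔ G.Adj v z)) :
    G.dist w u = G.dist w v :=
  le_antisymm (dist_le_of_dup G hG u v w hwu hwv hdup)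
    (dist_le_of_dup G hG v u w hwv hwu (fun z hzv hzu => (hdup z hzu hzv).symm))

/-- If two vertices of a connected graph have the same neighborhood (excluding each
other), then -1 (if they are adjacent) resp. -2 (if not) is an eigenvalue of the
distance matrix. -/
theorem distMatrix_eigenvalue_of_duplicate {V : Type*} [Fintype V] [DecidableEq V]
    (G : SimpleGraph V) (hG : G.Connected) (u v : V) (huv : u ≠ v)
    (hdup : ∀ w, w ≠ u → w ≠ v → (G.Adj u w ↔ G.Adj v w)) :
    (G.Adj u v → ∃ x : V → ℝ, x ≠ 0 ∧ (distMatrix G).mulVec x = (-1 : ℝ) • x) ∧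
    (¬ G.Adj u v → ∃ x : V → ℝ, x ≠ 0 ∧ (distMatrix G).mulVec x = (-2 : ℝ) • x) := by
  set x : V → ℝ := fun w => if w = u then 1 else if w = v then -1 else 0 with hx
  have hxne : x ≠ 0 := by
    intro h
    have := congrFun h u
    simp [hx] at this
  have hmul : ∀ i, (distMatrix G).mulVec x i =
      (G.dist i u : ℝ) - (G.dist i v : ℝ) := by
    intro i
    have : ∀ j, distMatrix G i j * x j =
        (if j = u then (G.dist i u : ℝ) else 0) + (if j = v then -(G.dist i v : ℝ) else 0) := by
      intro j
      by_cases hj : j = u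
      · subst hj; simp [hx, huv, distMatrix]
      · by_cases hj' : j = v
        · subst hj'; simp [hx, hj, distMatrix]
        · simp [hx, hj, hj', distMatrix]
    simp only [Matrix.mulVec, dotProduct, this, Finset.sum_add_distrib,
      Finset.sum_ite_eq', Finset.mem_univ, if_true]
    ring
  have hkey : ∀ (c : ℝ), (G.dist u v : ℝ) = c →
      (distMatrix G).mulVec x = (-c : ℝ) • x := by
    intro c hc
    funext i
    rw [hmul i]
    by_cases hiu : i = u
    · subst hiu
      simp [hx, hc, SimpleGraph.dist_self]
    · by_cases hiv : i = v
      · subst hiv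
        simp [hx, hiu, SimpleGraph.dist_self, SimpleGraph.dist_comm, hc]
      · rw [dist_eq_of_dup G hG u v i hiu hiv hdup]
        simp [hx, hiu, hiv]
  constructor
  · intro hadj
    refine ⟨x, hxne, ?_⟩
    have h1 : G.dist u v = 1 := SimpleGraph.dist_eq_one_iff_adj.mpr hadj
    have : (G.dist u v : ℝ) = 1 := by exact_mod_cast h1
    simpa using hkey 1 this
  · intro hnadj
    refine ⟨x, hxne, ?_⟩
    have hd2 : G.dist u v = 2 := by
      have hpos : 0 < G.dist u v := hG.pos_dist_of_ne huv
      have hne1 : G.dist u v ≠ 1 := fun h => hnadj (SimpleGraph.dist_eq_one_iff_adj.mp h)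
      have hle : G.dist u v ≤ 2 := by
        obtain ⟨p, hp⟩ := hG.exists_walk_length_eq_dist u v
        cases p with
        | nil => exact absurd rfl huv
        | @cons _ t _ h q =>
          have htu : t ≠ u := h.ne'
          have htv : t ≠ v := by rintro rfl; exact hnadj h
          have hadj : G.Adj v t := (hdup t htu htv).mp h
          have : G.dist u v ≤ (SimpleGraph.Walk.cons h (hadj.symm.toWalk)).length :=
            G.dist_le _
          simpa using this
      omega
    have : (G.dist u v : ℝ) = 2 := by exact_mod_cast hd2
    simpa using hkey 2 this
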